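/- arXiv:0808.3838 — 2 statements merged into one kernel-verified Lean document; each statement's English description precedes it below -/
import Mathlib

section
/- For every integer n ≥ 2, the function a ↦ h_T(a) := 2·cosh(a) · ∫_1^∞ (t^{2n−2} − 1)^{−1/2} · (cosh²(a)·t² − 1)^{−1/2} dt is strictly decreasing on (0, ∞), and h_T(a) > π/(n−1) for every a > 0. (Hence the heights of the translation-invariant minimal hypersurfaces M_d, d > 1, are bounded from below by π/(n−1), the upper bound of the heights of the catenoids.) -/
open MeasureTheory

section Stmt17AuxSection
open Set Filter


namespace Stmt17Aux

lemma sqrt_tendsto : Tendsto Real.sqrt atTop atTop := by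
  apply tendsto_atTop_atTop_of_monotone (fun _ _ h => Real.sqrt_le_sqrt h)
  intro b
  exact ⟨b ^ 2, by rw [Real.sqrt_sq_eq_abs]; exact le_abs_self b⟩

lemma P_pos {m : ℕ} (hm : 1 ≤ m) {t : ℝ} (ht : 1 < t) : 0 < t ^ (2 * m) - 1 :=
  sub_pos.2 (one_lt_pow₀ ht (by omega))

lemma base_hasDeriv {m : ℕ} (hm : 1 ≤ m) {t : ℝ} (ht : 1 < t) :
    HasDerivAt (fun t : ℝ => 2 * (m : ℝ)⁻¹ * Real.arctan (Real.sqrt (t ^ (2 * m) - 1)))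
      (2 / (t * Real.sqrt (t ^ (2 * m) - 1))) t := by
  have ht0 : (0:ℝ) < t := lt_trans one_pos ht
  have hP : (0:ℝ) < t ^ (2 * m) - 1 := P_pos hm ht
  have hs : (0:ℝ) < Real.sqrt (t ^ (2 * m) - 1) := Real.sqrt_pos.2 hP
  have h1 : HasDerivAt (fun t : ℝ => t ^ (2 * m) - 1) ((2 * m : ℕ) * t ^ (2 * m - 1)) t := by
    simpa using (hasDerivAt_pow (2 * m) t).sub_const 1
  have h2 : HasDerivAt (fun t : ℝ => Real.sqrt (t ^ (2 * m) - 1))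
      (1 / (2 * Real.sqrt (t ^ (2 * m) - 1)) * ((2 * m : ℕ) * t ^ (2 * m - 1))) t :=
    (Real.hasDerivAt_sqrt hP.ne').comp t h1
  have h3 := (Real.hasDerivAt_arctan (Real.sqrt (t ^ (2 * m) - 1))).comp t h2
  have h4 := h3.const_mul (2 * (m : ℝ)⁻¹)
  convert h4 using 1
  · rfl
  · rfl
  · rfl
  have hsq : Real.sqrt (t ^ (2 * m) - 1) ^ 2 = t ^ (2 * m) - 1 := Real.sq_sqrt hP.le
  have hm0 : (m : ℝ) ≠ 0 := Nat.cast_ne_zero.2 (by omega)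
  have hpow : t ^ (2 * m - 1) * t = t ^ (2 * m) := by
    rw [← pow_succ]; congr 1; omega
  rw [hsq]
  field_simp
  rw [← hpow]
  push_cast
  ring

end Stmt17Aux

namespace Stmt17Aux

lemma base_tendsto {m : ℕ} (hm : 1 ≤ m) :
    Tendsto (fun t : ℝ => 2 * (m : ℝ)⁻¹ * Real.arctan (Real.sqrt (t ^ (2 * m) - 1)))
      atTop (nhds (2 * (m : ℝ)⁻¹ * (Real.pi / 2))) := by
  apply Tendsto.const_mul
  have h0 : Tendsto (fun t : ℝ => t ^ (2 * m)) atTop atTop := tendsto_pow_atTop (by omega)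
  have h1 : Tendsto (fun t : ℝ => t ^ (2 * m) - 1) atTop atTop := by
    simpa [sub_eq_add_neg] using tendsto_atTop_add_const_right atTop (-1 : ℝ) h0
  have h2 : Tendsto (fun t : ℝ => Real.sqrt (t ^ (2 * m) - 1)) atTop atTop :=
    sqrt_tendsto.comp h1
  exact (Real.tendsto_arctan_atTop.mono_right nhdsWithin_le_nhds).comp h2

lemma base_cont (m : ℕ) :
    Continuous (fun t : ℝ => 2 * (m : ℝ)⁻¹ * Real.arctan (Real.sqrt (t ^ (2 * m) - 1))) := by
  exact continuous_const.mul (Real.continuous_arctan.comp (Real.continuous_sqrt.comp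
    ((continuous_pow _).sub continuous_const)))

lemma base_nonneg {m : ℕ} {t : ℝ} (ht : 1 < t) : 0 ≤ 2 / (t * Real.sqrt (t ^ (2 * m) - 1)) := by
  positivity

lemma base_integrable {m : ℕ} (hm : 1 ≤ m) :
    IntegrableOn (fun t : ℝ => 2 / (t * Real.sqrt (t ^ (2 * m) - 1))) (Ioi 1) :=
  integrableOn_Ioi_deriv_of_nonneg ((base_cont m).continuousWithinAt)
    (fun t ht => base_hasDeriv hm ht) (fun t ht => base_nonneg ht) (base_tendsto hm)

lemma base_integral {m : ℕ} (hm : 1 ≤ m) :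
    ∫ t in Ioi (1:ℝ), 2 / (t * Real.sqrt (t ^ (2 * m) - 1)) = Real.pi / (m : ℝ) := by
  rw [integral_Ioi_of_hasDerivAt_of_nonneg ((base_cont m).continuousWithinAt)
    (fun t ht => base_hasDeriv hm ht) (fun t ht => base_nonneg ht) (base_tendsto hm)]
  simp
  ring

end Stmt17Aux

namespace Stmt17Aux

lemma integral_strict_lt {f g : ℝ → ℝ} (hf : IntegrableOn f (Ioi 1)) (hg : IntegrableOn g (Ioi 1))
    (hlt : ∀ t ∈ Ioi (1:ℝ), f t < g t) :
    (∫ t in Ioi (1:ℝ), f t) < ∫ t in Ioi (1:ℝ), g t := by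
  have hd : IntegrableOn (fun t => g t - f t) (Ioi 1) := hg.sub hf
  have h0 : 0 < ∫ t in Ioi (1:ℝ), (g t - f t) := by
    rw [setIntegral_pos_iff_support_of_nonneg_ae ?_ hd]
    · refine lt_of_lt_of_le ?_ (measure_mono (fun t ht =>
        (⟨sub_ne_zero.2 (hlt t ht).ne', ht⟩ :
          t ∈ Function.support (fun t => g t - f t) ∩ Ioi 1)))
      simp [Real.volume_Ioi]
    · rw [EventuallyLE, ae_restrict_iff' measurableSet_Ioi]
      exact ae_of_all _ (fun t ht => sub_nonneg.2 (hlt t ht).le)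
  have := integral_sub hg hf
  rw [integral_sub hg hf] at h0
  linarith

/-- the integrand with the outer factor pulled in -/
noncomputable def G (m : ℕ) (c t : ℝ) : ℝ :=
  2 * c * (1 / (Real.sqrt (t ^ (2 * m) - 1) * Real.sqrt (c ^ 2 * t ^ 2 - 1)))

lemma A_pos {c t : ℝ} (hc : 1 ≤ c) (ht : 1 < t) : 0 < c ^ 2 * t ^ 2 - 1 := by
  have h1 : 1 ≤ c ^ 2 := by nlinarith
  have h2 : 1 < t ^ 2 := by nlinarith
  nlinarith

lemma G_integrable {m : ℕ} (hm : 1 ≤ m) {c : ℝ} (hc : 1 < c) :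
    IntegrableOn (G m c) (Ioi 1) := by
  have hc0 : (0:ℝ) < c := lt_trans one_pos hc
  have hc1 : (0:ℝ) < c ^ 2 - 1 := by nlinarith
  refine Integrable.mono'
    ((base_integrable hm).const_mul (c / Real.sqrt (c ^ 2 - 1))) ?_ ?_
  · refine (ContinuousOn.aestronglyMeasurable ?_ measurableSet_Ioi)
    refine ContinuousOn.mul continuousOn_const (ContinuousOn.div continuousOn_const
      (((Real.continuous_sqrt.comp ((continuous_pow _).sub continuous_const)).mul
        (Real.continuous_sqrt.comp ((continuous_const.mul (continuous_pow 2)).sub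
          continuous_const))).continuousOn) ?_)
    intro t ht
    have ht1 : (1:ℝ) < t := ht
    have hP := P_pos hm ht1
    have hA := A_pos hc.le ht1
    have h1 : (0:ℝ) < Real.sqrt (t ^ (2 * m) - 1) := Real.sqrt_pos.2 hP
    have h2 : (0:ℝ) < Real.sqrt (c ^ 2 * t ^ 2 - 1) := Real.sqrt_pos.2 hA
    have hne : Real.sqrt (t ^ (2 * m) - 1) * Real.sqrt (c ^ 2 * t ^ 2 - 1) ≠ 0 := by positivity
    exact hne
  · rw [ae_restrict_iff' measurableSet_Ioi]
    refine ae_of_all _ (fun t ht => ?_)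
    have ht1 : (1:ℝ) < t := ht
    have ht0 : (0:ℝ) < t := lt_trans one_pos ht1
    have hP := P_pos hm ht1
    have hsP : (0:ℝ) < Real.sqrt (t ^ (2 * m) - 1) := Real.sqrt_pos.2 hP
    have hA := A_pos hc.le ht1
    have hsA : (0:ℝ) < Real.sqrt (c ^ 2 * t ^ 2 - 1) := Real.sqrt_pos.2 hA
    have hkey : Real.sqrt (c ^ 2 - 1) * t ≤ Real.sqrt (c ^ 2 * t ^ 2 - 1) := by
      rw [show Real.sqrt (c ^ 2 - 1) * t = Real.sqrt ((c ^ 2 - 1) * t ^ 2) by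
        rw [Real.sqrt_mul hc1.le, Real.sqrt_sq ht0.le]]
      exact Real.sqrt_le_sqrt (by nlinarith)
    have hGnn : 0 ≤ G m c t := by
      unfold G; positivity
    rw [Real.norm_eq_abs, abs_of_nonneg hGnn]
    have hsc : (0:ℝ) < Real.sqrt (c ^ 2 - 1) := Real.sqrt_pos.2 hc1
    have h1 : 1 / Real.sqrt (c ^ 2 * t ^ 2 - 1) ≤ 1 / (Real.sqrt (c ^ 2 - 1) * t) :=
      one_div_le_one_div_of_le (by positivity) hkey
    calc G m c t = (2 * c / Real.sqrt (t ^ (2*m) - 1)) * (1 / Real.sqrt (c ^ 2 * t ^ 2 - 1)) := by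
          unfold G; field_simp
      _ ≤ (2 * c / Real.sqrt (t ^ (2*m) - 1)) * (1 / (Real.sqrt (c ^ 2 - 1) * t)) :=
          mul_le_mul_of_nonneg_left h1 (by positivity)
      _ = c / Real.sqrt (c ^ 2 - 1) * (2 / (t * Real.sqrt (t ^ (2*m) - 1))) := by
          field_simp

end Stmt17Aux

namespace Stmt17Aux

lemma G_strict_anti {m : ℕ} (hm : 1 ≤ m) {c1 c2 t : ℝ} (h1 : 1 ≤ c1) (h12 : c1 < c2)
    (ht : 1 < t) : G m c2 t < G m c1 t := by
  have hc2 : 1 ≤ c2 := h1.trans h12.le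
  have hc10 : (0:ℝ) < c1 := lt_of_lt_of_le one_pos h1
  have hc20 : (0:ℝ) < c2 := lt_of_lt_of_le one_pos hc2
  have hA1 := A_pos h1 ht
  have hA2 := A_pos hc2 ht
  have hs1 : (0:ℝ) < Real.sqrt (c1 ^ 2 * t ^ 2 - 1) := Real.sqrt_pos.2 hA1
  have hs2 : (0:ℝ) < Real.sqrt (c2 ^ 2 * t ^ 2 - 1) := Real.sqrt_pos.2 hA2
  have hP := P_pos hm ht
  have hsP : (0:ℝ) < Real.sqrt (t ^ (2 * m) - 1) := Real.sqrt_pos.2 hP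
  have hkey : 2 * c2 / Real.sqrt (c2 ^ 2 * t ^ 2 - 1)
      < 2 * c1 / Real.sqrt (c1 ^ 2 * t ^ 2 - 1) := by
    rw [div_lt_div_iff₀ hs2 hs1]
    refine lt_of_pow_lt_pow_left₀ 2 (by positivity) ?_
    have e1 : (2 * c2 * Real.sqrt (c1 ^ 2 * t ^ 2 - 1)) ^ 2
        = 4 * c2 ^ 2 * (c1 ^ 2 * t ^ 2 - 1) := by
      rw [mul_pow, Real.sq_sqrt hA1.le]; ring
    have e2 : (2 * c1 * Real.sqrt (c2 ^ 2 * t ^ 2 - 1)) ^ 2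
        = 4 * c1 ^ 2 * (c2 ^ 2 * t ^ 2 - 1) := by
      rw [mul_pow, Real.sq_sqrt hA2.le]; ring
    rw [e1, e2]
    nlinarith [sq_nonneg (c1 + c2), sq_nonneg (c2 - c1)]
  have : G m c2 t = (2 * c2 / Real.sqrt (c2 ^ 2 * t ^ 2 - 1))
      * (1 / Real.sqrt (t ^ (2 * m) - 1)) := by unfold G; field_simp
  rw [this, show G m c1 t = (2 * c1 / Real.sqrt (c1 ^ 2 * t ^ 2 - 1))
      * (1 / Real.sqrt (t ^ (2 * m) - 1)) from by unfold G; field_simp]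
  exact mul_lt_mul_of_pos_right hkey (by positivity)

lemma G_gt_base {m : ℕ} (hm : 1 ≤ m) {c t : ℝ} (hc : 1 < c) (ht : 1 < t) :
    2 / (t * Real.sqrt (t ^ (2 * m) - 1)) < G m c t := by
  have hc0 : (0:ℝ) < c := lt_trans one_pos hc
  have ht0 : (0:ℝ) < t := lt_trans one_pos ht
  have hA := A_pos hc.le ht
  have hsA : (0:ℝ) < Real.sqrt (c ^ 2 * t ^ 2 - 1) := Real.sqrt_pos.2 hA
  have hP := P_pos hm ht
  have hsP : (0:ℝ) < Real.sqrt (t ^ (2 * m) - 1) := Real.sqrt_pos.2 hP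
  have hlt : Real.sqrt (c ^ 2 * t ^ 2 - 1) < c * t := by
    have : Real.sqrt (c ^ 2 * t ^ 2 - 1) < Real.sqrt ((c * t) ^ 2) :=
      Real.sqrt_lt_sqrt (by positivity) (by nlinarith)
    rwa [Real.sqrt_sq (by positivity)] at this
  have h1 : 1 / (c * t) < 1 / Real.sqrt (c ^ 2 * t ^ 2 - 1) :=
    one_div_lt_one_div_of_lt hsA hlt
  calc 2 / (t * Real.sqrt (t ^ (2 * m) - 1))
      = (2 * c / Real.sqrt (t ^ (2 * m) - 1)) * (1 / (c * t)) := by field_simp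
    _ < (2 * c / Real.sqrt (t ^ (2 * m) - 1)) * (1 / Real.sqrt (c ^ 2 * t ^ 2 - 1)) :=
        mul_lt_mul_of_pos_left h1 (by positivity)
    _ = G m c t := by unfold G; field_simp

end Stmt17Aux


end Stmt17AuxSection

open Stmt17Aux in
/-- the height
`h_T(a) = 2 cosh(a) ∫_1^∞ (t^{2n-2}-1)^{-1/2} (cosh²(a)t²-1)^{-1/2} dt`
of the translation-invariant minimal hypersurfaces is strictly decreasing on `(0, ∞)`
and satisfies `h_T(a) > π/(n-1)` for every `a > 0`. -/
theorem stmt_17 (n : ℕ) (hn : 2 ≤ n) :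
    StrictAntiOn
      (fun a => 2 * Real.cosh a *
        ∫ t in Set.Ioi (1 : ℝ),
          1 / (Real.sqrt (t ^ (2 * n - 2) - 1) * Real.sqrt (Real.cosh a ^ 2 * t ^ 2 - 1)))
      (Set.Ioi 0) ∧
    ∀ a > (0 : ℝ),
      Real.pi / ((n : ℝ) - 1) <
        2 * Real.cosh a *
          ∫ t in Set.Ioi (1 : ℝ),
            1 / (Real.sqrt (t ^ (2 * n - 2) - 1) *
              Real.sqrt (Real.cosh a ^ 2 * t ^ 2 - 1)) := by
  set m : ℕ := n - 1 with hmdef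
  have hm : 1 ≤ m := by omega
  have em : 2 * n - 2 = 2 * m := by omega
  have key : ∀ a : ℝ, 2 * Real.cosh a *
      (∫ t in Set.Ioi (1 : ℝ),
        1 / (Real.sqrt (t ^ (2 * n - 2) - 1) * Real.sqrt (Real.cosh a ^ 2 * t ^ 2 - 1)))
      = ∫ t in Set.Ioi (1 : ℝ), G m (Real.cosh a) t := by
    intro a
    simp only [em]
    rw [← integral_const_mul]
    rfl
  constructor
  · intro a1 h1 a2 h2 h12
    simp only
    rw [key a1, key a2]
    have hc1 : 1 < Real.cosh a1 := Real.one_lt_cosh.2 (ne_of_gt h1)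
    have hcc : Real.cosh a1 < Real.cosh a2 := by
      rw [Real.cosh_lt_cosh, abs_of_pos h1, abs_of_pos (lt_trans h1 h12)]
      exact h12
    exact integral_strict_lt (G_integrable hm (lt_trans hc1 hcc)) (G_integrable hm hc1)
      (fun t ht => G_strict_anti hm hc1.le hcc ht)
  · intro a ha
    rw [key a]
    have hc : 1 < Real.cosh a := Real.one_lt_cosh.2 (ne_of_gt ha)
    have hcast : ((n : ℝ) - 1) = (m : ℝ) := by
      rw [hmdef]
      push_cast [Nat.cast_sub (by omega : 1 ≤ n)]
      ring
    rw [hcast, ← base_integral hm]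
    exact integral_strict_lt (base_integrable hm) (G_integrable hm hc)
      (fun t ht => G_gt_base hm hc ht)
end

section
/- For every integer n ≥ 2, the function h_T(a) = 2·cosh(a) · ∫_1^∞ (t^{2n−2} − 1)^{−1/2} · (cosh²(a)·t² − 1)^{−1/2} dt satisfies lim_{a→0⁺} h_T(a) = +∞ and lim_{a→∞} h_T(a) = π/(n−1). -/
open MeasureTheory Real Set Filter

-- generic integrability lemma
lemma st18_integrableOn_of_bounds {f : ℝ → ℝ} (hf : ContinuousOn f (Set.Ioi 1))
    (C₁ C₂ : ℝ)
    (h1 : ∀ t ∈ Set.Ioc (1:ℝ) 2, |f t| ≤ C₁ / Real.sqrt (t - 1))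
    (h2 : ∀ t ∈ Set.Ioi (2:ℝ), |f t| ≤ C₂ / t ^ 2) :
    MeasureTheory.IntegrableOn f (Set.Ioi 1) := by
  have hsplit : Set.Ioc (1:ℝ) 2 ∪ Set.Ioi 2 = Set.Ioi 1 := Set.Ioc_union_Ioi_eq_Ioi one_le_two
  rw [← hsplit]
  apply MeasureTheory.IntegrableOn.union
  · -- on Ioc 1 2
    have hbase : IntervalIntegrable (fun x : ℝ => x ^ (-(1:ℝ)/2)) volume 0 1 :=
      intervalIntegral.intervalIntegrable_rpow' (by norm_num)
    have htrans : IntervalIntegrable (fun x : ℝ => (x - 1) ^ (-(1:ℝ)/2)) volume 1 2 := by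
      have := hbase.comp_sub_right 1
      norm_num at this
      convert this using 2 with x
      norm_num
    have hint : MeasureTheory.IntegrableOn (fun x : ℝ => (x - 1) ^ (-(1:ℝ)/2)) (Set.Ioc 1 2) := by
      rw [← intervalIntegrable_iff_integrableOn_Ioc_of_le one_le_two]
      exact htrans
    refine (hint.const_mul C₁).mono' ?_ ?_
    · exact (hf.mono (Set.Ioc_subset_Ioi_self)).aestronglyMeasurable measurableSet_Ioc
    · rw [MeasureTheory.ae_restrict_iff' measurableSet_Ioc]
      filter_upwards with t ht
      have h01 : (0:ℝ) ≤ t - 1 := by linarith [ht.1]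
      have : Real.sqrt (t - 1) = (t-1) ^ ((1:ℝ)/2) := Real.sqrt_eq_rpow _
      rw [Real.norm_eq_abs]
      calc |f t| ≤ C₁ / Real.sqrt (t - 1) := h1 t ht
        _ = C₁ * (t - 1) ^ (-(1:ℝ)/2) := by
            rw [this, div_eq_mul_inv, ← Real.rpow_neg h01]
            norm_num
  · -- on Ioi 2
    have hint : MeasureTheory.IntegrableOn (fun x : ℝ => x ^ (-(2:ℝ))) (Set.Ioi 2) :=
      integrableOn_Ioi_rpow_of_lt (by norm_num) (by norm_num)
    refine (hint.const_mul C₂).mono' ?_ ?_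
    · exact (hf.mono (show Set.Ioi (2:ℝ) ⊆ Set.Ioi 1 from fun x hx => Set.mem_Ioi.2 (lt_trans one_lt_two (Set.mem_Ioi.1 hx)))).aestronglyMeasurable measurableSet_Ioi
    · rw [MeasureTheory.ae_restrict_iff' measurableSet_Ioi]
      filter_upwards with t ht
      have h0 : (0:ℝ) < t := lt_trans two_pos ht
      rw [Real.norm_eq_abs]
      calc |f t| ≤ C₂ / t ^ 2 := h2 t ht
        _ = C₂ * t ^ (-(2:ℝ)) := by
            rw [div_eq_mul_inv, ← Real.rpow_natCast t 2, ← Real.rpow_neg h0.le]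
            norm_num



lemma st18_pow_sub_one_pos {m : ℕ} (hm : 1 ≤ m) {t : ℝ} (ht : 1 < t) :
    0 < t ^ (2*m) - 1 := by
  have : 1 < t ^ (2*m) := one_lt_pow₀ ht (by omega)
  linarith

lemma st18_sqrt_lb_near {m : ℕ} (hm : 1 ≤ m) {t : ℝ} (ht : 1 < t) :
    Real.sqrt (t - 1) ≤ Real.sqrt (t ^ (2*m) - 1) := by
  apply Real.sqrt_le_sqrt
  have : t ≤ t ^ (2*m) := le_self_pow₀ (le_of_lt ht) (by omega)
  linarith

lemma st18_sqrt_lb_far {m : ℕ} (hm : 1 ≤ m) {t : ℝ} (ht : 2 ≤ t) :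
    t / 2 ≤ Real.sqrt (t ^ (2*m) - 1) := by
  have h1 : (1:ℝ) ≤ t := by linarith
  have h2 : t ^ 2 ≤ t ^ (2*m) := pow_le_pow_right₀ h1 (by omega)
  have h3 : (t/2)^2 ≤ t ^ (2*m) - 1 := by nlinarith
  calc t/2 = Real.sqrt ((t/2)^2) := (Real.sqrt_sq (by linarith)).symm
    _ ≤ _ := Real.sqrt_le_sqrt h3

lemma st18_limit_fn_contOn (m : ℕ) (hm : 1 ≤ m) :
    ContinuousOn (fun t : ℝ => 2 / (t * Real.sqrt (t ^ (2*m) - 1))) (Set.Ioi 1) := by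
  apply ContinuousOn.div continuousOn_const
  · exact continuousOn_id.mul ((continuousOn_pow _).sub continuousOn_const).sqrt
  · intro t ht
    have h1 : (1:ℝ) < t := ht
    have h2 := st18_pow_sub_one_pos hm h1
    have h3 : 0 < Real.sqrt (t ^ (2*m) - 1) := Real.sqrt_pos.2 h2
    positivity

lemma st18_limit_fn_integrable (m : ℕ) (hm : 1 ≤ m) :
    MeasureTheory.IntegrableOn (fun t : ℝ => 2 / (t * Real.sqrt (t ^ (2*m) - 1))) (Set.Ioi 1) := by
  apply st18_integrableOn_of_bounds (st18_limit_fn_contOn m hm) 2 4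
  · intro t ht
    have h1 : (1:ℝ) < t := ht.1
    have hs : 0 < Real.sqrt (t - 1) := Real.sqrt_pos.2 (by linarith)
    have hP : 0 < Real.sqrt (t ^ (2*m) - 1) := Real.sqrt_pos.2 (st18_pow_sub_one_pos hm h1)
    have hnn : 0 ≤ 2 / (t * Real.sqrt (t ^ (2*m) - 1)) := by positivity
    rw [abs_of_nonneg hnn]
    apply div_le_div_of_nonneg_left (by norm_num) (by positivity)
    calc Real.sqrt (t - 1) ≤ Real.sqrt (t ^ (2*m) - 1) := st18_sqrt_lb_near hm h1
      _ = 1 * Real.sqrt (t ^ (2*m) - 1) := (one_mul _).symm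
      _ ≤ t * Real.sqrt (t ^ (2*m) - 1) := by
          apply mul_le_mul_of_nonneg_right h1.le (Real.sqrt_nonneg _)
  · intro t ht
    have h2 : (2:ℝ) < t := ht
    have h1 : (1:ℝ) < t := by linarith
    have hP : 0 < Real.sqrt (t ^ (2*m) - 1) := Real.sqrt_pos.2 (st18_pow_sub_one_pos hm h1)
    have hnn : 0 ≤ 2 / (t * Real.sqrt (t ^ (2*m) - 1)) := by positivity
    rw [abs_of_nonneg hnn]
    rw [div_le_div_iff₀ (by positivity) (by positivity)]
    have hfar : t / 2 ≤ Real.sqrt (t ^ (2*m) - 1) := st18_sqrt_lb_far hm h2.le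
    nlinarith [Real.sqrt_nonneg (t ^ (2*m) - 1)]

set_option maxHeartbeats 1000000 in
lemma st18_key_integral (m : ℕ) (hm : 1 ≤ m) :
    ∫ t in Set.Ioi (1:ℝ), 2 / (t * Real.sqrt (t ^ (2*m) - 1)) = π / m := by
  have hm0 : (m:ℝ) ≠ 0 := Nat.cast_ne_zero.2 (by omega)
  have hmpos : (0:ℝ) < m := by positivity
  set F : ℝ → ℝ := fun t => (2 / m) * Real.arccos ((t ^ m)⁻¹) with hF
  have hcont : ContinuousWithinAt F (Set.Ici 1) 1 := by
    apply ContinuousAt.continuousWithinAt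
    exact continuousAt_const.mul (Real.continuous_arccos.continuousAt.comp
      ((continuousAt_pow 1 m).inv₀ (by norm_num)))
  have hderiv : ∀ x ∈ Set.Ioi (1:ℝ), HasDerivAt F (2 / (x * Real.sqrt (x ^ (2*m) - 1))) x := by
    intro x hx
    have hx1 : (1:ℝ) < x := hx
    have hx0 : (0:ℝ) < x := by linarith
    have hxm : (1:ℝ) < x ^ m := one_lt_pow₀ hx1 (by omega)
    have hxm0 : x ^ m ≠ 0 := by positivity
    have hu0 : (0:ℝ) < (x ^ m)⁻¹ := by positivity
    have hu1 : (x ^ m)⁻¹ < 1 := by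
      rw [inv_lt_one_iff₀]; right; exact hxm
    have hS : 0 < x ^ (2*m) - 1 := st18_pow_sub_one_pos hm hx1
    have hSs : 0 < Real.sqrt (x ^ (2*m) - 1) := Real.sqrt_pos.2 hS
    have hinner : HasDerivAt (fun t : ℝ => (t ^ m)⁻¹)
        (-(↑m * x ^ (m - 1)) / (x ^ m) ^ 2) x := (hasDerivAt_pow m x).inv hxm0
    have harccos : HasDerivAt Real.arccos (-(1 / Real.sqrt (1 - ((x ^ m)⁻¹) ^ 2))) ((x ^ m)⁻¹) :=
      Real.hasDerivAt_arccos (by linarith) (by linarith)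
    have hcomp := (harccos.comp x hinner).const_mul ((2:ℝ) / m)
    have hcomp' : HasDerivAt F _ x := hcomp
    convert hcomp' using 1
    -- algebraic identity
    have hpow2 : (x ^ m) ^ 2 = x ^ (2*m) := by
      rw [← pow_mul]; ring_nf
    have hsq : Real.sqrt (1 - ((x ^ m)⁻¹) ^ 2) = Real.sqrt (x ^ (2*m) - 1) / x ^ m := by
      have h1 : 1 - ((x ^ m)⁻¹) ^ 2 = (x ^ (2*m) - 1) / (x ^ m) ^ 2 := by
        field_simp
        rw [hpow2]
      rw [h1, Real.sqrt_div hS.le, Real.sqrt_sq (by positivity)]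
    rw [hsq]
    have hxm1 : x ^ (m - 1) * x = x ^ m := by
      rw [← pow_succ]; congr 1; omega
    have hsqne : Real.sqrt (x ^ (2*m) - 1) ≠ 0 := ne_of_gt hSs
    field_simp
    rw [← hxm1, mul_comm]
  have hint := st18_limit_fn_integrable m hm
  have htend : Filter.Tendsto F Filter.atTop (nhds (π / m)) := by
    have h1 : Filter.Tendsto (fun t : ℝ => (t ^ m)⁻¹) Filter.atTop (nhds 0) :=
      (tendsto_pow_atTop (by omega)).inv_tendsto_atTop
    have h2 : Filter.Tendsto (fun t : ℝ => Real.arccos ((t ^ m)⁻¹)) Filter.atTop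
        (nhds (Real.arccos 0)) := (Real.continuous_arccos.tendsto 0).comp h1
    rw [Real.arccos_zero] at h2
    have h3 := Filter.Tendsto.const_mul ((2:ℝ)/m) h2
    have h4 : (2:ℝ)/m * (π/2) = π/m := by field_simp
    rw [hF, ← h4]
    exact h3
  have := MeasureTheory.integral_Ioi_of_hasDerivAt_of_tendsto hcont hderiv hint htend
  rw [this]
  simp [hF, Real.arccos_one]

lemma st18_ctsq {c t : ℝ} (hc : 1 ≤ c) (ht : 1 < t) : 0 < c^2*t^2 - 1 := by
  have hct : 1 < c * t := by nlinarith
  nlinarith [hct]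

lemma st18_cosh_atTop : Filter.Tendsto Real.cosh Filter.atTop Filter.atTop := by
  have h : Filter.Tendsto (fun x : ℝ => Real.exp x / 2) Filter.atTop Filter.atTop :=
    Real.tendsto_exp_atTop.atTop_div_const two_pos
  apply tendsto_atTop_mono _ h
  intro x
  rw [Real.cosh_eq]
  have := Real.exp_pos (-x)
  linarith

lemma st18_G_nonneg (m : ℕ) (a t : ℝ) :
    0 ≤ 2 * Real.cosh a * (1 / (Real.sqrt (t ^ (2*m) - 1) * Real.sqrt (Real.cosh a ^ 2 * t ^ 2 - 1))) := by
  have := Real.cosh_pos a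
  positivity

lemma st18_G_contOn (m : ℕ) (hm : 1 ≤ m) {a : ℝ} :
    ContinuousOn (fun t : ℝ => 2 * Real.cosh a *
      (1 / (Real.sqrt (t ^ (2*m) - 1) * Real.sqrt (Real.cosh a ^ 2 * t ^ 2 - 1)))) (Set.Ioi 1) := by
  apply ContinuousOn.mul continuousOn_const
  apply ContinuousOn.div continuousOn_const
  · exact (((continuousOn_pow _).sub continuousOn_const).sqrt).mul
      ((continuousOn_const.mul (continuousOn_pow 2)).sub continuousOn_const).sqrt
  · intro t ht
    have ht1 : (1:ℝ) < t := ht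
    have h1 : 0 < Real.sqrt (t ^ (2*m) - 1) := Real.sqrt_pos.2 (st18_pow_sub_one_pos hm ht1)
    have hc : 1 ≤ Real.cosh a := Real.one_le_cosh a
    have h2 : 0 < Real.sqrt (Real.cosh a ^ 2 * t ^ 2 - 1) := Real.sqrt_pos.2 (st18_ctsq hc ht1)
    positivity

lemma st18_G_integrable (m : ℕ) (hm : 1 ≤ m) {a : ℝ} (ha : a ≠ 0) :
    MeasureTheory.IntegrableOn (fun t : ℝ => 2 * Real.cosh a *
      (1 / (Real.sqrt (t ^ (2*m) - 1) * Real.sqrt (Real.cosh a ^ 2 * t ^ 2 - 1)))) (Set.Ioi 1) := by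
  set c := Real.cosh a with hc
  have hc1 : 1 < c := Real.one_lt_cosh.2 ha
  have hc0 : 0 < c := by linarith
  apply st18_integrableOn_of_bounds (st18_G_contOn m hm) (2*c / Real.sqrt (c^2-1)) 8
  · intro t ht
    have ht1 : (1:ℝ) < t := ht.1
    have hP : 0 < Real.sqrt (t ^ (2*m) - 1) := Real.sqrt_pos.2 (st18_pow_sub_one_pos hm ht1)
    have hQ : 0 < Real.sqrt (c ^ 2 * t ^ 2 - 1) := Real.sqrt_pos.2 (st18_ctsq hc1.le ht1)
    have hcs : 0 < Real.sqrt (c^2 - 1) := Real.sqrt_pos.2 (by nlinarith)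
    have hts : 0 < Real.sqrt (t - 1) := Real.sqrt_pos.2 (by linarith)
    rw [abs_of_nonneg (st18_G_nonneg m a t), mul_one_div, div_div]
    apply div_le_div_of_nonneg_left (by positivity) (by positivity)
    have htt : (0:ℝ) ≤ t^2 - 1 := by nlinarith
    have hcle : c^2 - 1 ≤ c^2*t^2 - 1 := by
      nlinarith [mul_nonneg (mul_nonneg hc0.le hc0.le) htt]
    calc Real.sqrt (c^2-1) * Real.sqrt (t-1)
        ≤ Real.sqrt (c ^ 2 * t ^ 2 - 1) * Real.sqrt (t ^ (2*m) - 1) :=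
          mul_le_mul (Real.sqrt_le_sqrt hcle) (st18_sqrt_lb_near hm ht1) hts.le hQ.le
      _ = Real.sqrt (t ^ (2*m) - 1) * Real.sqrt (c ^ 2 * t ^ 2 - 1) := mul_comm _ _
  · intro t ht
    have ht2 : (2:ℝ) < t := ht
    have ht1 : (1:ℝ) < t := by linarith
    have hP : 0 < Real.sqrt (t ^ (2*m) - 1) := Real.sqrt_pos.2 (st18_pow_sub_one_pos hm ht1)
    have hQ : 0 < Real.sqrt (c ^ 2 * t ^ 2 - 1) := Real.sqrt_pos.2 (st18_ctsq hc1.le ht1)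
    rw [abs_of_nonneg (st18_G_nonneg m a t), mul_one_div]
    have hQ' : c * t / 2 ≤ Real.sqrt (c ^ 2 * t ^ 2 - 1) := by
      calc c * t / 2 = Real.sqrt ((c*t/2)^2) := (Real.sqrt_sq (by positivity)).symm
        _ ≤ _ := by
            apply Real.sqrt_le_sqrt
            have hct : 2 < c*t := by nlinarith
            nlinarith [hct]
    have hP' : t / 2 ≤ Real.sqrt (t ^ (2*m) - 1) := st18_sqrt_lb_far hm ht2.le
    rw [div_le_div_iff₀ (by positivity) (by positivity)]
    have key : c * t^2 / 4 ≤ Real.sqrt (t ^ (2*m) - 1) * Real.sqrt (c ^ 2 * t ^ 2 - 1) := by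
      calc c * t^2/4 = (t/2) * (c*t/2) := by ring
        _ ≤ _ := mul_le_mul hP' hQ' (by positivity) hP.le
    nlinarith

lemma st18_BB_integrable (m : ℕ) (hm : 1 ≤ m) :
    MeasureTheory.IntegrableOn (fun t : ℝ =>
      2 / (Real.sqrt (t ^ (2*m) - 1) * Real.sqrt (t ^ 2 - ((Real.cosh 1)⁻¹)^2))) (Set.Ioi 1) := by
  set s := (Real.cosh 1)⁻¹ with hs
  have hc1 : 1 < Real.cosh 1 := Real.one_lt_cosh.2 one_ne_zero
  have hs0 : 0 < s := by positivity
  have hs1 : s < 1 := by rw [hs, inv_lt_one_iff₀]; right; exact hc1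
  have hss : s^2 < 1 := by nlinarith
  have hcont : ContinuousOn (fun t : ℝ =>
      2 / (Real.sqrt (t ^ (2*m) - 1) * Real.sqrt (t ^ 2 - s^2))) (Set.Ioi 1) := by
    apply ContinuousOn.div continuousOn_const
    · exact (((continuousOn_pow _).sub continuousOn_const).sqrt).mul
        (((continuousOn_pow 2).sub continuousOn_const).sqrt)
    · intro t ht
      have ht1 : (1:ℝ) < t := ht
      have h1 : 0 < Real.sqrt (t ^ (2*m) - 1) := Real.sqrt_pos.2 (st18_pow_sub_one_pos hm ht1)
      have h2 : 0 < Real.sqrt (t ^ 2 - s^2) := Real.sqrt_pos.2 (by nlinarith)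
      positivity
  apply st18_integrableOn_of_bounds hcont (2 / Real.sqrt (1 - s^2)) 8
  · intro t ht
    have ht1 : (1:ℝ) < t := ht.1
    have hP : 0 < Real.sqrt (t ^ (2*m) - 1) := Real.sqrt_pos.2 (st18_pow_sub_one_pos hm ht1)
    have hR : 0 < Real.sqrt (t ^ 2 - s^2) := Real.sqrt_pos.2 (by nlinarith)
    have hr : 0 < Real.sqrt (1 - s^2) := Real.sqrt_pos.2 (by nlinarith)
    have hts : 0 < Real.sqrt (t - 1) := Real.sqrt_pos.2 (by linarith)
    have hnn : 0 ≤ 2 / (Real.sqrt (t ^ (2*m) - 1) * Real.sqrt (t ^ 2 - s^2)) := by positivity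
    rw [abs_of_nonneg hnn, div_div]
    apply div_le_div_of_nonneg_left (by norm_num) (by positivity)
    calc Real.sqrt (1-s^2) * Real.sqrt (t-1)
        ≤ Real.sqrt (t ^ 2 - s^2) * Real.sqrt (t ^ (2*m) - 1) :=
          mul_le_mul (Real.sqrt_le_sqrt (by nlinarith)) (st18_sqrt_lb_near hm ht1) hts.le hR.le
      _ = Real.sqrt (t ^ (2*m) - 1) * Real.sqrt (t ^ 2 - s^2) := mul_comm _ _
  · intro t ht
    have ht2 : (2:ℝ) < t := ht
    have ht1 : (1:ℝ) < t := by linarith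
    have hP : 0 < Real.sqrt (t ^ (2*m) - 1) := Real.sqrt_pos.2 (st18_pow_sub_one_pos hm ht1)
    have hR : 0 < Real.sqrt (t ^ 2 - s^2) := Real.sqrt_pos.2 (by nlinarith)
    have hnn : 0 ≤ 2 / (Real.sqrt (t ^ (2*m) - 1) * Real.sqrt (t ^ 2 - s^2)) := by positivity
    have hR' : t/2 ≤ Real.sqrt (t ^ 2 - s^2) := by
      calc t/2 = Real.sqrt ((t/2)^2) := (Real.sqrt_sq (by positivity)).symm
        _ ≤ _ := Real.sqrt_le_sqrt (by nlinarith)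
    have hP' : t / 2 ≤ Real.sqrt (t ^ (2*m) - 1) := st18_sqrt_lb_far hm ht2.le
    rw [abs_of_nonneg hnn, div_le_div_iff₀ (by positivity) (by positivity)]
    nlinarith

lemma st18_part2 (m : ℕ) (hm : 1 ≤ m) :
    Filter.Tendsto (fun a : ℝ => ∫ t in Set.Ioi (1:ℝ), 2 * Real.cosh a *
      (1 / (Real.sqrt (t ^ (2*m) - 1) * Real.sqrt (Real.cosh a ^ 2 * t ^ 2 - 1))))
      Filter.atTop (nhds (π / m)) := by
  rw [← st18_key_integral m hm]
  set s : ℝ := (Real.cosh 1)⁻¹ with hs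
  have h1c : (1:ℝ) < Real.cosh 1 := Real.one_lt_cosh.2 one_ne_zero
  have hs0 : 0 < s := by positivity
  have hs1 : s < 1 := by rw [hs, inv_lt_one_iff₀]; right; exact h1c
  apply MeasureTheory.tendsto_integral_filter_of_dominated_convergence
    (fun t => 2 / (Real.sqrt (t ^ (2*m) - 1) * Real.sqrt (t ^ 2 - s^2)))
  · filter_upwards [Filter.eventually_ge_atTop (1:ℝ)] with a _
    exact (st18_G_contOn m hm).aestronglyMeasurable measurableSet_Ioi
  · filter_upwards [st18_cosh_atTop.eventually_ge_atTop (Real.cosh 1)] with a hca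
    rw [MeasureTheory.ae_restrict_iff' measurableSet_Ioi]
    filter_upwards with t ht
    have ht1 : (1:ℝ) < t := ht
    set c := Real.cosh a with hc
    have hc1 : (1:ℝ) < c := lt_of_lt_of_le h1c hca
    have hc0 : (0:ℝ) < c := by linarith
    have hP : 0 < Real.sqrt (t ^ (2*m) - 1) := Real.sqrt_pos.2 (st18_pow_sub_one_pos hm ht1)
    have hQ : 0 < Real.sqrt (c ^ 2 * t ^ 2 - 1) := Real.sqrt_pos.2 (st18_ctsq hc1.le ht1)
    have hR : 0 < Real.sqrt (t ^ 2 - s^2) := Real.sqrt_pos.2 (by nlinarith)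
    rw [Real.norm_eq_abs, abs_of_nonneg (st18_G_nonneg m a t), mul_one_div,
      div_le_div_iff₀ (by positivity) (by positivity)]
    have hcs : 1 ≤ c * s := by
      rw [hs, ← div_eq_mul_inv]
      exact (one_le_div (by linarith)).2 hca
    have hcs2 : 1 ≤ (c * s)^2 := one_le_pow₀ hcs
    have key : c * Real.sqrt (t ^ 2 - s^2) ≤ Real.sqrt (c ^ 2 * t ^ 2 - 1) := by
      have h1 : c * Real.sqrt (t ^ 2 - s^2) = Real.sqrt (c^2 * (t^2 - s^2)) := by
        rw [Real.sqrt_mul (sq_nonneg c), Real.sqrt_sq hc0.le]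
      rw [h1]
      apply Real.sqrt_le_sqrt
      nlinarith [hcs2]
    calc 2 * c * (Real.sqrt (t ^ (2*m) - 1) * Real.sqrt (t ^ 2 - s^2))
        = 2 * Real.sqrt (t ^ (2*m) - 1) * (c * Real.sqrt (t ^ 2 - s^2)) := by ring
      _ ≤ 2 * Real.sqrt (t ^ (2*m) - 1) * Real.sqrt (c ^ 2 * t ^ 2 - 1) :=
          mul_le_mul_of_nonneg_left key (by positivity)
      _ = 2 * (Real.sqrt (t ^ (2*m) - 1) * Real.sqrt (c ^ 2 * t ^ 2 - 1)) := by ring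
  · exact st18_BB_integrable m hm
  · rw [MeasureTheory.ae_restrict_iff' measurableSet_Ioi]
    filter_upwards with t ht
    have ht1 : (1:ℝ) < t := ht
    have ht0 : (0:ℝ) < t := by linarith
    have hP : 0 < Real.sqrt (t ^ (2*m) - 1) := Real.sqrt_pos.2 (st18_pow_sub_one_pos hm ht1)
    have key : ∀ a : ℝ, 2 / (Real.sqrt (t ^ (2*m) - 1) * Real.sqrt (t^2 - ((Real.cosh a)⁻¹)^2))
        = 2 * Real.cosh a *
          (1 / (Real.sqrt (t ^ (2*m) - 1) * Real.sqrt (Real.cosh a ^ 2 * t ^ 2 - 1))) := by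
      intro a
      set c := Real.cosh a with hc
      have hc1 : (1:ℝ) ≤ c := Real.one_le_cosh a
      have hc0 : (0:ℝ) < c := by linarith
      have hci : c⁻¹ ≤ 1 := inv_le_one_of_one_le₀ hc1
      have hci0 : 0 < c⁻¹ := by positivity
      have hX : 0 < t^2 - (c⁻¹)^2 := by nlinarith
      have hid : c^2 * t^2 - 1 = c^2 * (t^2 - (c⁻¹)^2) := by
        field_simp
      rw [hid, Real.sqrt_mul (sq_nonneg c), Real.sqrt_sq hc0.le]
      have hXs : 0 < Real.sqrt (t^2 - (c⁻¹)^2) := Real.sqrt_pos.2 hX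
      rw [mul_one_div]
      rw [div_eq_div_iff (by positivity) (by positivity)]
      ring
    apply Filter.Tendsto.congr (fun a => key a)
    have h0 : Filter.Tendsto (fun a : ℝ => ((Real.cosh a)⁻¹)^2) Filter.atTop (nhds 0) := by
      have h := st18_cosh_atTop.inv_tendsto_atTop
      have h2 := h.pow 2
      norm_num at h2
      simpa [inv_pow] using h2
    have hcont : ContinuousAt (fun x : ℝ => 2 / (Real.sqrt (t ^ (2*m) - 1) *
        Real.sqrt (t^2 - x))) 0 := by
      apply ContinuousAt.div continuousAt_const
      · exact continuousAt_const.mul ((continuousAt_const.sub continuousAt_id).sqrt)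
      · have : (0:ℝ) < Real.sqrt (t ^ (2*m) - 1) * Real.sqrt (t^2 - 0) := by
          rw [sub_zero, Real.sqrt_sq ht0.le]; positivity
        exact ne_of_gt this
    have := hcont.tendsto.comp h0
    simp only [Function.comp_def] at this
    convert this using 2
    rw [sub_zero, Real.sqrt_sq ht0.le, mul_comm]

set_option maxHeartbeats 2000000 in
lemma st18_part1 (m : ℕ) (hm : 1 ≤ m) :
    Filter.Tendsto (fun a : ℝ => ∫ t in Set.Ioi (1:ℝ), 2 * Real.cosh a *
      (1 / (Real.sqrt (t ^ (2*m) - 1) * Real.sqrt (Real.cosh a ^ 2 * t ^ 2 - 1))))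
      (nhdsWithin 0 (Set.Ioi 0)) Filter.atTop := by
  set K : ℝ := (2*m : ℝ) * 2^(2*m) with hK
  have hKpos : 0 < K := by
    have : (0:ℝ) < (2*m:ℝ) := by positivity
    positivity
  set D : ℝ := Real.sqrt (13*K) with hD
  have hDpos : 0 < D := Real.sqrt_pos.2 (by nlinarith [hKpos])
  -- the lower bound function
  set L : ℝ → ℝ := fun a => 2/D * (-(Real.log (Real.cosh a ^ 2 - 1))) with hL
  have hLtend : Filter.Tendsto L (nhdsWithin 0 (Set.Ioi 0)) Filter.atTop := by
    have hεt : Filter.Tendsto (fun a : ℝ => Real.cosh a ^ 2 - 1)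
        (nhdsWithin 0 (Set.Ioi 0)) (nhdsWithin 0 (Set.Ioi 0)) := by
      apply tendsto_nhdsWithin_of_tendsto_nhds_of_eventually_within
      · have hcont : Filter.Tendsto (fun a : ℝ => Real.cosh a ^ 2 - 1) (nhds 0) (nhds 0) := by
          have h : Continuous (fun a : ℝ => Real.cosh a ^ 2 - 1) :=
            (Real.continuous_cosh.pow 2).sub continuous_const
          exact h.tendsto' 0 0 (by simp)
        exact hcont.mono_left nhdsWithin_le_nhds
      · filter_upwards [self_mem_nhdsWithin] with a ha
        have h1 : 1 < Real.cosh a := Real.one_lt_cosh.2 (ne_of_gt ha)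
        have : (1:ℝ) < Real.cosh a ^ 2 := by nlinarith
        exact sub_pos.2 this
    have hlog := Real.tendsto_log_nhdsGT_zero.comp hεt
    have hneg : Filter.Tendsto (fun a : ℝ => -(Real.log (Real.cosh a ^ 2 - 1)))
        (nhdsWithin 0 (Set.Ioi 0)) Filter.atTop := by
      have := Filter.tendsto_neg_atTop_iff.2 hlog
      simpa [Function.comp] using this
    exact hneg.const_mul_atTop (by positivity)
  apply Filter.tendsto_atTop_mono' _ _ hLtend
  -- eventual inequality
  have hsqrt2 : (1:ℝ) < Real.sqrt 2 := by
    rw [show (1:ℝ) = Real.sqrt 1 by simp]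
    exact Real.sqrt_lt_sqrt zero_le_one one_lt_two
  have hsqrt2' : Real.sqrt 2 < 2 := by
    nlinarith [Real.sq_sqrt (show (0:ℝ) ≤ 2 by norm_num), Real.sqrt_nonneg 2]
  have hev : ∀ᶠ a in nhdsWithin 0 (Set.Ioi 0), Real.cosh a < Real.sqrt 2 := by
    apply Filter.Eventually.filter_mono nhdsWithin_le_nhds
    have : Filter.Tendsto Real.cosh (nhds 0) (nhds 1) := by
      simpa using Real.continuous_cosh.tendsto 0
    exact this.eventually_lt_const hsqrt2
  filter_upwards [hev, self_mem_nhdsWithin] with a hca ha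
  -- setup
  set c := Real.cosh a with hc
  have hc1 : (1:ℝ) < c := Real.one_lt_cosh.2 (ne_of_gt ha)
  have hc0 : (0:ℝ) < c := by linarith
  have hc2 : c < 2 := lt_trans hca hsqrt2'
  set ε : ℝ := c^2 - 1 with hε
  have hε0 : 0 < ε := by nlinarith
  have hε1 : ε < 1 := by nlinarith [Real.sq_sqrt (show (0:ℝ) ≤ 2 by norm_num)]
  have h1e2 : 1 + ε ≤ 2 := by linarith
  have hsub : Set.Ioc (1+ε) 2 ⊆ Set.Ioi (1:ℝ) := fun x hx => lt_trans (by linarith) hx.1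
  -- lower function integrable on Ioc
  have hlowcont : ContinuousOn (fun t : ℝ => 2/D * (t-1)⁻¹) (Set.Icc (1+ε) 2) := by
    apply ContinuousOn.mul continuousOn_const
    apply ContinuousOn.inv₀ (continuousOn_id.sub continuousOn_const)
    intro t ht
    have : 1 + ε ≤ t := ht.1
    simp only [Pi.sub_apply, id_eq]
    intro h
    have : t = 1 := by linarith [sub_eq_zero.1 h]
    linarith
  have hlowint : MeasureTheory.IntegrableOn (fun t : ℝ => 2/D * (t-1)⁻¹) (Set.Ioc (1+ε) 2) := by
    rw [← intervalIntegrable_iff_integrableOn_Ioc_of_le h1e2]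
    apply ContinuousOn.intervalIntegrable
    rwa [Set.uIcc_of_le h1e2]
  have hGint := st18_G_integrable m hm (ne_of_gt ha)
  -- pointwise bound on Ioc (1+ε) 2
  have hpt : ∀ t ∈ Set.Ioc (1+ε) 2, 2/D * (t-1)⁻¹ ≤ 2 * c *
      (1 / (Real.sqrt (t ^ (2*m) - 1) * Real.sqrt (c ^ 2 * t ^ 2 - 1))) := by
    intro t ht
    have ht1 : (1:ℝ) < t := by linarith [ht.1]
    have ht2 : t ≤ 2 := ht.2
    have htε : 1 + ε < t := ht.1
    have hP : 0 < Real.sqrt (t ^ (2*m) - 1) := Real.sqrt_pos.2 (st18_pow_sub_one_pos hm ht1)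
    have hQ : 0 < Real.sqrt (c ^ 2 * t ^ 2 - 1) := Real.sqrt_pos.2 (st18_ctsq hc1.le ht1)
    -- bound on P
    have hKb : t ^ (2*m) - 1 ≤ K * (t-1) := by
      have hg : (∑ i ∈ Finset.range (2*m), t^i) * (t-1) = t^(2*m) - 1 := geom_sum_mul t (2*m)
      have hsum : (∑ i ∈ Finset.range (2*m), t^i) ≤ K := by
        calc (∑ i ∈ Finset.range (2*m), t^i) ≤ ∑ i ∈ Finset.range (2*m), (2:ℝ)^(2*m) := by
              apply Finset.sum_le_sum
              intro i hi
              calc t^i ≤ 2^i := pow_le_pow_left₀ (by linarith) (by linarith) i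
                _ ≤ (2:ℝ)^(2*m) := pow_le_pow_right₀ one_le_two
                    (le_of_lt (Finset.mem_range.1 hi))
          _ = K := by
              rw [Finset.sum_const, Finset.card_range, nsmul_eq_mul, hK]
              push_cast
              ring
      calc t ^ (2*m) - 1 = (∑ i ∈ Finset.range (2*m), t^i) * (t-1) := hg.symm
        _ ≤ K * (t-1) := mul_le_mul_of_nonneg_right hsum (by linarith)
    -- bound on Q
    have hQb : c^2 * t^2 - 1 ≤ 13 * (t-1) := by
      have h4 : c^2 < 4 := by nlinarith
      have htt : t^2 - 1 ≤ 3*(t-1) := by nlinarith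
      have hεt2 : ε ≤ t - 1 := by linarith
      nlinarith [mul_le_mul h4.le htt (by nlinarith) (by norm_num : (0:ℝ) ≤ 4)]
    -- combine
    have hPQ : Real.sqrt (t ^ (2*m) - 1) * Real.sqrt (c ^ 2 * t ^ 2 - 1) ≤ D * (t-1) := by
      calc Real.sqrt (t ^ (2*m) - 1) * Real.sqrt (c ^ 2 * t ^ 2 - 1)
          ≤ Real.sqrt (K * (t-1)) * Real.sqrt (13 * (t-1)) :=
            mul_le_mul (Real.sqrt_le_sqrt hKb) (Real.sqrt_le_sqrt hQb) hQ.le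
              (Real.sqrt_nonneg _)
        _ = Real.sqrt ((K * (t-1)) * (13 * (t-1))) :=
            (Real.sqrt_mul (mul_nonneg hKpos.le (by linarith)) _).symm
        _ = Real.sqrt ((13*K) * (t-1)^2) := by congr 1; ring
        _ = D * (t-1) := by
            rw [Real.sqrt_mul (by nlinarith [hKpos] : (0:ℝ) ≤ 13*K), Real.sqrt_sq (by linarith)]
    have hPQ0 : 0 < Real.sqrt (t ^ (2*m) - 1) * Real.sqrt (c ^ 2 * t ^ 2 - 1) := by positivity
    have hDiv : 1 / (D * (t-1)) ≤
        1 / (Real.sqrt (t ^ (2*m) - 1) * Real.sqrt (c ^ 2 * t ^ 2 - 1)) :=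
      one_div_le_one_div_of_le hPQ0 hPQ
    calc 2/D * (t-1)⁻¹ = 2 * (1 / (D * (t-1))) := by
          rw [one_div, mul_inv]
          ring
      _ ≤ 2 * (1 / (Real.sqrt (t ^ (2*m) - 1) * Real.sqrt (c ^ 2 * t ^ 2 - 1))) := by
          linarith
      _ ≤ 2 * c * (1 / (Real.sqrt (t ^ (2*m) - 1) * Real.sqrt (c ^ 2 * t ^ 2 - 1))) := by
          have h1 : 0 ≤ 1 / (Real.sqrt (t ^ (2*m) - 1) * Real.sqrt (c ^ 2 * t ^ 2 - 1)) := by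
            positivity
          nlinarith
  -- chain of integrals
  have hchain1 : ∫ t in Set.Ioc (1+ε) 2, 2 * c *
      (1 / (Real.sqrt (t ^ (2*m) - 1) * Real.sqrt (c ^ 2 * t ^ 2 - 1))) ≤
      ∫ t in Set.Ioi (1:ℝ), 2 * c *
      (1 / (Real.sqrt (t ^ (2*m) - 1) * Real.sqrt (c ^ 2 * t ^ 2 - 1))) := by
    apply MeasureTheory.setIntegral_mono_set hGint
    · filter_upwards with t
      exact st18_G_nonneg m a t
    · exact HasSubset.Subset.eventuallyLE hsub
  have hchain2 : ∫ t in Set.Ioc (1+ε) 2, 2/D * (t-1)⁻¹ ≤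
      ∫ t in Set.Ioc (1+ε) 2, 2 * c *
      (1 / (Real.sqrt (t ^ (2*m) - 1) * Real.sqrt (c ^ 2 * t ^ 2 - 1))) :=
    MeasureTheory.setIntegral_mono_on hlowint (hGint.mono_set hsub) measurableSet_Ioc hpt
  -- value of the lower integral
  have hval : ∫ t in Set.Ioc (1+ε) 2, 2/D * (t-1)⁻¹ = 2/D * (-(Real.log ε)) := by
    rw [MeasureTheory.integral_const_mul]
    congr 1
    have h1 : ∫ t in Set.Ioc (1+ε) 2, (t-1)⁻¹ = ∫ t in (1+ε)..2, (t-1)⁻¹ :=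
      (intervalIntegral.integral_of_le h1e2).symm
    rw [h1]
    have h2 := intervalIntegral.integral_comp_sub_right (a := 1+ε) (b := 2)
      (fun u : ℝ => u⁻¹) 1
    rw [show (1:ℝ) + ε - 1 = ε by ring, show (2:ℝ) - 1 = 1 by norm_num] at h2
    rw [h2, integral_inv_of_pos hε0 one_pos, one_div, Real.log_inv]
  calc L a = 2/D * (-(Real.log ε)) := rfl
    _ = ∫ t in Set.Ioc (1+ε) 2, 2/D * (t-1)⁻¹ := hval.symm
    _ ≤ _ := le_trans hchain2 hchain1

/-- the height
`h_T(a) = 2 cosh(a) ∫_1^∞ (t^{2n-2}-1)^{-1/2} (cosh²(a)t²-1)^{-1/2} dt`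
satisfies `h_T(a) → +∞` as `a → 0⁺` and `h_T(a) → π/(n-1)` as `a → ∞`. -/
theorem stmt_18 (n : ℕ) (hn : 2 ≤ n) :
    Filter.Tendsto
      (fun a => 2 * Real.cosh a *
        ∫ t in Set.Ioi (1 : ℝ),
          1 / (Real.sqrt (t ^ (2 * n - 2) - 1) * Real.sqrt (Real.cosh a ^ 2 * t ^ 2 - 1)))
      (nhdsWithin 0 (Set.Ioi 0)) Filter.atTop ∧
    Filter.Tendsto
      (fun a => 2 * Real.cosh a *
        ∫ t in Set.Ioi (1 : ℝ),
          1 / (Real.sqrt (t ^ (2 * n - 2) - 1) * Real.sqrt (Real.cosh a ^ 2 * t ^ 2 - 1)))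
      Filter.atTop (nhds (Real.pi / ((n : ℝ) - 1))) := by
  set m := n - 1 with hm'
  have hm : 1 ≤ m := by omega
  have h2n : 2 * n - 2 = 2 * m := by omega
  have hcast : ((n : ℝ) - 1) = (m : ℝ) := by
    rw [hm', Nat.cast_sub (by omega)]
    norm_num
  have heq : ∀ a : ℝ, (∫ t in Set.Ioi (1:ℝ), 2 * Real.cosh a *
      (1 / (Real.sqrt (t ^ (2*m) - 1) * Real.sqrt (Real.cosh a ^ 2 * t ^ 2 - 1))))
      = 2 * Real.cosh a * ∫ t in Set.Ioi (1:ℝ),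
        1 / (Real.sqrt (t ^ (2 * n - 2) - 1) * Real.sqrt (Real.cosh a ^ 2 * t ^ 2 - 1)) := by
    intro a
    simp only [h2n]
    exact MeasureTheory.integral_const_mul _ _
  constructor
  · exact (st18_part1 m hm).congr heq
  · rw [hcast]
    exact (st18_part2 m hm).congr heq
end
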